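/- Two directed acyclic graphs G and H on vertex set [p] satisfy c_G = c_H if and only if c_G(S) = c_H(S) for all subsets S of [p] with |S| ∈ {2, 3}. -/

import Mathlib

open scoped Classical

/-- A directed acyclic graph on vertex set `Fin p`. -/
structure DAGraph (p : ℕ) where
  E : Fin p → Fin p → Prop
  acyclic : ∀ i, ¬ Relation.TransGen E i i

/-- The characteristic imset of a directed graph given by the relation `E`. -/
noncomputable def imsetRel {p : ℕ} (E : Fin p → Fin p → Prop) (S : Finset (Fin p)) : ℝ :=
  if ∃ i ∈ S, ∀ j ∈ S, j ≠ i → E j i then 1 else 0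

/-- The skeleton (underlying undirected graph) of a DAG. -/
def DAGraph.skeleton {p : ℕ} (G : DAGraph p) : SimpleGraph (Fin p) where
  Adj a b := G.E a b ∨ G.E b a
  symm := ⟨fun a b h => Or.symm h⟩
  loopless := ⟨fun a (h : G.E a a ∨ G.E a a) =>
    h.elim (fun h' => G.acyclic a (Relation.TransGen.single h'))
      (fun h' => G.acyclic a (Relation.TransGen.single h'))⟩

/-- The characteristic imset of a DAG. -/
noncomputable def DAGraph.cim {p : ℕ} (G : DAGraph p) : Finset (Fin p) → ℝ := imsetRel G.E

/-- `G.vStruct a b c` : `a → b ← c` is a v-structure (with `a`, `c` non-adjacent). -/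
def DAGraph.vStruct {p : ℕ} (G : DAGraph p) (a b c : Fin p) : Prop :=
  a ≠ c ∧ G.E a b ∧ G.E c b ∧ ¬ G.skeleton.Adj a c

/-- The relation obtained from `E` by reversing the single edge `i → j`. -/
def reverseRel {p : ℕ} (E : Fin p → Fin p → Prop) (i j : Fin p) : Fin p → Fin p → Prop :=
  fun a b => (E a b ∧ ¬(a = i ∧ b = j)) ∨ (a = j ∧ b = i)

/-- `Wit E S` : some `i ∈ S` has all other elements of `S` as parents. -/
def Wit {p : ℕ} (E : Fin p → Fin p → Prop) (S : Finset (Fin p)) : Prop :=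
  ∃ i ∈ S, ∀ j ∈ S, j ≠ i → E j i

lemma imsetRel_eq_iff {p : ℕ} (E F : Fin p → Fin p → Prop) (S : Finset (Fin p)) :
    imsetRel E S = imsetRel F S ↔ (Wit E S ↔ Wit F S) := by
  by_cases h1 : Wit E S <;> by_cases h2 : Wit F S <;>
    simp only [imsetRel, Wit] at * <;> simp [h1, h2] <;> norm_num

lemma combine {p : ℕ} {E : Fin p → Fin p → Prop} {S : Finset (Fin p)} {a b w : Fin p}
    (haS : a ∈ S) (hab : a ≠ b)
    (hwa : w ∈ S.erase a) (hwaP : ∀ m ∈ S.erase a, m ≠ w → E m w)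
    (hwbP : ∀ m ∈ S.erase b, m ≠ w → E m w) : Wit E S := by
  refine ⟨w, Finset.mem_of_mem_erase hwa, fun m hm hmw => ?_⟩
  by_cases hma : m = a
  · subst hma
    exact hwbP m (Finset.mem_erase.2 ⟨hab, hm⟩) hmw
  · exact hwaP m (Finset.mem_erase.2 ⟨hma, hm⟩) hmw

lemma pairwit {p : ℕ} (H : DAGraph p) {S : Finset (Fin p)} {a b wa wb : Fin p}
    (hwa : wa ∈ S.erase a) (hwaP : ∀ m ∈ S.erase a, m ≠ wa → H.E m wa)
    (hwb : wb ∈ S.erase b) (hwbP : ∀ m ∈ S.erase b, m ≠ wb → H.E m wb) :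
    wa = wb ∨ wa = b ∨ wb = a := by
  by_contra hcon
  push_neg at hcon
  obtain ⟨h1, h2, h3⟩ := hcon
  have e1 : H.E wa wb :=
    hwbP wa (Finset.mem_erase.2 ⟨h2, Finset.mem_of_mem_erase hwa⟩) h1
  have e2 : H.E wb wa :=
    hwaP wb (Finset.mem_erase.2 ⟨h3, Finset.mem_of_mem_erase hwb⟩) (Ne.symm h1)
  exact H.acyclic wa ((Relation.TransGen.single e1).tail e2)

lemma key {p : ℕ} (G H : DAGraph p)
    (h3 : ∀ S : Finset (Fin p), S.card = 2 ∨ S.card = 3 → (Wit G.E S ↔ Wit H.E S)) :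
    ∀ n : ℕ, ∀ S : Finset (Fin p), S.card = n → 2 ≤ n → Wit G.E S → Wit H.E S := by
  intro n
  induction n using Nat.strong_induction_on with
  | _ n ih =>
    intro S hSn hn hGS
    rcases Nat.lt_or_ge n 4 with h4 | h4
    · exact (h3 S (by omega)).1 hGS
    · -- n ≥ 4
      obtain ⟨i, hiS, hiP⟩ := hGS
      -- extract three distinct elements of S \ {i}
      have hci : (S.erase i).card = n - 1 := by
        rw [Finset.card_erase_of_mem hiS, hSn]
      obtain ⟨j, hj⟩ : ∃ j, j ∈ S.erase i := Finset.card_pos.1 (by omega) |>.imp (fun _ h => h)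
      have hcj : ((S.erase i).erase j).card = n - 2 := by
        rw [Finset.card_erase_of_mem hj, hci]; omega
      obtain ⟨k, hk⟩ : ∃ k, k ∈ (S.erase i).erase j :=
        Finset.card_pos.1 (by omega) |>.imp (fun _ h => h)
      have hck : (((S.erase i).erase j).erase k).card = n - 3 := by
        rw [Finset.card_erase_of_mem hk, hcj]; omega
      obtain ⟨l, hl⟩ : ∃ l, l ∈ ((S.erase i).erase j).erase k :=
        Finset.card_pos.1 (by omega) |>.imp (fun _ h => h)
      -- basic facts
      have hjS : j ∈ S := Finset.mem_of_mem_erase hj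
      have hji : j ≠ i := (Finset.mem_erase.1 hj).1
      have hkj : k ≠ j := (Finset.mem_erase.1 hk).1
      have hki : k ≠ i := (Finset.mem_erase.1 (Finset.mem_of_mem_erase hk)).1
      have hkS : k ∈ S := Finset.mem_of_mem_erase (Finset.mem_of_mem_erase hk)
      have hlk : l ≠ k := (Finset.mem_erase.1 hl).1
      have hl' := Finset.mem_of_mem_erase hl
      have hlj : l ≠ j := (Finset.mem_erase.1 hl').1
      have hli : l ≠ i := (Finset.mem_erase.1 (Finset.mem_of_mem_erase hl')).1
      have hlS : l ∈ S := Finset.mem_of_mem_erase (Finset.mem_of_mem_erase hl')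
      -- for each a ≠ i in S, get an H-witness of S.erase a
      have getw : ∀ a ∈ S, a ≠ i → Wit H.E (S.erase a) := by
        intro a haS hai
        refine ih (n - 1) (by omega) _ (by rw [Finset.card_erase_of_mem haS, hSn]) (by omega) ?_
        exact ⟨i, Finset.mem_erase.2 ⟨Ne.symm hai, hiS⟩,
          fun m hm hmi => hiP m (Finset.mem_of_mem_erase hm) hmi⟩
      obtain ⟨wj, hwj, hwjP⟩ := getw j hjS hji
      obtain ⟨wk, hwk, hwkP⟩ := getw k hkS hki
      obtain ⟨wl, hwl, hwlP⟩ := getw l hlS hli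
      -- edges derived from a witness whose value equals another index
      -- main case analysis
      rcases pairwit H hwj hwjP hwk hwkP with h1 | h1 | h1
      · -- wj = wk : common witness
        exact combine hjS hkj.symm hwj hwjP (h1 ▸ hwkP)
      · -- wj = k
        rcases pairwit H hwj hwjP hwl hwlP with h2 | h2 | h2
        · exact combine hjS hlj.symm hwj hwjP (h2 ▸ hwlP)
        · exact absurd (h1 ▸ h2 : k = l) (Ne.symm hlk)
        · -- wl = j ; now compare wk, wl
          rcases pairwit H hwk hwkP hwl hwlP with h5 | h5 | h5
          · exact combine hkS hlk.symm hwk hwkP (h5 ▸ hwlP)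
          · -- wj = k, wk = l, wl = j : 3-cycle
            exfalso
            have e1 : H.E l wj := hwjP l (Finset.mem_erase.2 ⟨hlj, hlS⟩) (h1 ▸ hlk)
            have e2 : H.E j wk := hwkP j (Finset.mem_erase.2 ⟨hkj.symm, hjS⟩) (h5 ▸ hlj.symm)
            have e3 : H.E k wl := hwlP k (Finset.mem_erase.2 ⟨hlk.symm, hkS⟩) (h2 ▸ hkj)
            rw [h1] at e1; rw [h5] at e2; rw [h2] at e3
            exact H.acyclic l (((Relation.TransGen.single e1).tail e3).tail e2)
          · exact absurd (h2 ▸ h5 : j = k) (Ne.symm hkj)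
      · -- wk = j
        rcases pairwit H hwk hwkP hwl hwlP with h2 | h2 | h2
        · exact combine hkS hlk.symm hwk hwkP (h2 ▸ hwlP)
        · exact absurd (h1 ▸ h2 : j = l) (Ne.symm hlj)
        · -- wl = k ; compare wj, wl
          rcases pairwit H hwj hwjP hwl hwlP with h5 | h5 | h5
          · exact combine hjS hlj.symm hwj hwjP (h5 ▸ hwlP)
          · -- wk = j, wl = k, wj = l : 3-cycle
            exfalso
            have e1 : H.E l wk := hwkP l (Finset.mem_erase.2 ⟨hlk, hlS⟩) (h1 ▸ hlj)
            have e2 : H.E j wl := hwlP j (Finset.mem_erase.2 ⟨hlj.symm, hjS⟩) (h2 ▸ hkj.symm)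
            have e3 : H.E k wj := hwjP k (Finset.mem_erase.2 ⟨hkj, hkS⟩) (h5 ▸ hlk.symm)
            rw [h1] at e1; rw [h2] at e2; rw [h5] at e3
            exact H.acyclic l (((Relation.TransGen.single e1).tail e2).tail e3)
          · exact absurd (h2 ▸ h5 : k = j) hkj

/-- Two DAGs `G`, `H` on `[p]` have equal characteristic imsets iff
they agree on all coordinates indexed by sets of cardinality 2 or 3. -/
theorem stmt1 {p : ℕ} (G H : DAGraph p) :
    (∀ S : Finset (Fin p), 2 ≤ S.card → G.cim S = H.cim S) ↔
      (∀ S : Finset (Fin p), S.card = 2 ∨ S.card = 3 → G.cim S = H.cim S) := by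
  constructor
  · intro h S hS
    exact h S (by omega)
  · intro h S hS
    have h3 : ∀ S : Finset (Fin p), S.card = 2 ∨ S.card = 3 → (Wit G.E S ↔ Wit H.E S) := by
      intro T hT
      exact (imsetRel_eq_iff G.E H.E T).1 (h T hT)
    have h3' : ∀ S : Finset (Fin p), S.card = 2 ∨ S.card = 3 → (Wit H.E S ↔ Wit G.E S) :=
      fun T hT => (h3 T hT).symm
    refine (imsetRel_eq_iff G.E H.E S).2 ⟨?_, ?_⟩
    · exact key G H h3 S.card S rfl hS
    · exact key H G h3' S.card S rfl hS
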